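/- Let A be any n×n real matrix and let m₁, m₂, k be nonnegative integers with k ≤ min(m₁, m₂) and m₁ + m₂ − k < n. Then n · S_{m₁,m₂,k}(I_{n−1}) · S_{m₁,m₂,k}(A) = S_{m₁,m₂,k}(I_n) · Σ_{γ} S_{m₁,m₂,k}(A(γ)), where the sum runs over all subsets γ of {1,…,n} of size n−1 and A(γ) denotes the principal submatrix of A with rows and columns indexed by γ (this is the cross-multiplied form of the averaging identity S_{m₁,m₂,k}(A)/S_{m₁,m₂,k}(I_n) = (1/n) Σ_γ S_{m₁,m₂,k}(A(γ))/S_{m₁,m₂,k}(I_{n−1})). -/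

import Mathlib

noncomputable def pminor {ι : Type*} [Fintype ι] [DecidableEq ι]
    (A : Matrix ι ι ℝ) (α : Finset ι) : ℝ :=
  (A.submatrix ((↑) : α → ι) ((↑) : α → ι)).det

noncomputable def Sfun {ι : Type*} [Fintype ι] [DecidableEq ι]
    (A : Matrix ι ι ℝ) (m₁ m₂ k : ℕ) : ℝ :=
  ∑ α ∈ Finset.univ.powersetCard m₁, ∑ β ∈ Finset.univ.powersetCard m₂,
    if (α ∩ β).card = k then pminor A α * pminor A β else 0

open Finset

lemma pminor_one {ι : Type*} [Fintype ι] [DecidableEq ι] (α : Finset ι) :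
    pminor (1 : Matrix ι ι ℝ) α = 1 := by
  unfold pminor
  rw [Matrix.submatrix_one _ Subtype.coe_injective, Matrix.det_one]

lemma Sfun_one_congr {ι κ : Type*} [Fintype ι] [DecidableEq ι] [Fintype κ] [DecidableEq κ]
    (e : ι ≃ κ) (m₁ m₂ k : ℕ) :
    Sfun (1 : Matrix ι ι ℝ) m₁ m₂ k = Sfun (1 : Matrix κ κ ℝ) m₁ m₂ k := by
  unfold Sfun
  simp only [pminor_one, mul_one]
  rw [← Finset.sum_product', ← Finset.sum_product']
  refine Finset.sum_nbij' (fun p => (p.1.map e.toEmbedding, p.2.map e.toEmbedding))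
    (fun p => (p.1.map e.symm.toEmbedding, p.2.map e.symm.toEmbedding)) ?_ ?_ ?_ ?_ ?_
  · intro p hp
    simp only [Finset.mem_product, Finset.mem_powersetCard_univ, Finset.card_map] at hp ⊢
    exact hp
  · intro p hp
    simp only [Finset.mem_product, Finset.mem_powersetCard_univ, Finset.card_map] at hp ⊢
    exact hp
  · intro p hp
    simp [Finset.map_map]
  · intro p hp
    simp [Finset.map_map]
  · intro p hp
    simp [← Finset.map_inter, Finset.card_map]

lemma pminor_map {ι : Type*} [Fintype ι] [DecidableEq ι] (A : Matrix ι ι ℝ)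
    (γ : Finset ι) (α : Finset γ) :
    pminor (A.submatrix (Subtype.val : γ → ι) Subtype.val) α
      = pminor A (α.map (Function.Embedding.subtype (· ∈ γ))) := by
  unfold pminor
  have hb : Function.Bijective (fun x : α =>
      (⟨(x.1 : ι), Finset.mem_map.2 ⟨x.1, x.2, rfl⟩⟩ :
        (α.map (Function.Embedding.subtype (· ∈ γ)) : Finset ι))) := by
    constructor
    · intro x y hxy
      have h2 := congrArg Subtype.val hxy
      exact Subtype.ext (Subtype.ext h2)
    · rintro ⟨z, hz⟩
      obtain ⟨a, ha, rfl⟩ := Finset.mem_map.1 hz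
      exact ⟨⟨a, ha⟩, rfl⟩
  let e := Equiv.ofBijective _ hb
  have : (A.submatrix ((↑) : (α.map (Function.Embedding.subtype (· ∈ γ))) → ι)
      ((↑) : (α.map (Function.Embedding.subtype (· ∈ γ))) → ι)).submatrix e e
      = (A.submatrix (Subtype.val : γ → ι) Subtype.val).submatrix
          ((↑) : α → γ) ((↑) : α → γ) := rfl
  rw [← this, Matrix.det_submatrix_equiv_self]

lemma Sfun_submatrix {ι : Type*} [Fintype ι] [DecidableEq ι] (A : Matrix ι ι ℝ)
    (γ : Finset ι) (m₁ m₂ k : ℕ) :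
    Sfun (A.submatrix (Subtype.val : γ → ι) Subtype.val) m₁ m₂ k
      = ∑ α ∈ γ.powersetCard m₁, ∑ β ∈ γ.powersetCard m₂,
          if (α ∩ β).card = k then pminor A α * pminor A β else 0 := by
  unfold Sfun
  rw [← Finset.sum_product', ← Finset.sum_product']
  refine Finset.sum_nbij' (fun p => (p.1.map (Function.Embedding.subtype (· ∈ γ)),
      p.2.map (Function.Embedding.subtype (· ∈ γ))))
    (fun p => (p.1.subtype (· ∈ γ), p.2.subtype (· ∈ γ))) ?_ ?_ ?_ ?_ ?_
  · intro p hp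
    simp only [Finset.mem_product, Finset.mem_powersetCard_univ] at hp
    simp only [Finset.mem_product, Finset.mem_powersetCard, Finset.card_map]
    refine ⟨⟨?_, hp.1⟩, ?_, hp.2⟩ <;>
    · intro x hx
      obtain ⟨a, _, rfl⟩ := Finset.mem_map.1 hx
      exact a.2
  · intro p hp
    simp only [Finset.mem_product, Finset.mem_powersetCard] at hp
    simp only [Finset.mem_product, Finset.mem_powersetCard_univ, Finset.card_subtype]
    rw [Finset.filter_true_of_mem (fun x hx => hp.1.1 hx),
        Finset.filter_true_of_mem (fun x hx => hp.2.1 hx)]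
    exact ⟨hp.1.2, hp.2.2⟩
  · intro p hp
    obtain ⟨a, b⟩ := p
    simp only [Prod.mk.injEq]
    constructor <;> (ext x; simp [Finset.mem_subtype, Finset.mem_map])
  · intro p hp
    obtain ⟨a, b⟩ := p
    simp only [Finset.mem_product, Finset.mem_powersetCard] at hp
    simp only [Prod.mk.injEq]
    exact ⟨Finset.subtype_map_of_mem (fun x hx => hp.1.1 hx),
      Finset.subtype_map_of_mem (fun x hx => hp.2.1 hx)⟩
  · intro p hp
    rw [← Finset.map_inter, Finset.card_map, pminor_map, pminor_map]

lemma pc_filter {ι : Type*} [Fintype ι] [DecidableEq ι] (γ : Finset ι) (m : ℕ) :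
    γ.powersetCard m = (Finset.univ.powersetCard m).filter (· ⊆ γ) := by
  ext α
  simp only [Finset.mem_powersetCard, Finset.mem_filter, Finset.subset_univ, true_and]
  tauto

lemma count_supersets {n : ℕ} (hn : 0 < n) (s : Finset (Fin n)) :
    ((Finset.univ.powersetCard (n-1)).filter (fun γ => s ⊆ γ)).card = n - s.card := by
  have h1 : ((Finset.univ.powersetCard (n-1)).filter (fun γ => s ⊆ γ)).card
      = (sᶜ.powersetCard 1).card := by
    apply Finset.card_nbij' (fun γ => γᶜ) (fun t => tᶜ)
    · intro γ hγ
      simp only [Finset.mem_coe, Finset.mem_filter, Finset.mem_powersetCard_univ] at hγ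
      simp only [Finset.mem_coe, Finset.mem_powersetCard]
      refine ⟨Finset.compl_subset_compl.2 hγ.2, ?_⟩
      rw [Finset.card_compl, hγ.1, Fintype.card_fin]
      omega
    · intro t ht
      simp only [Finset.mem_coe, Finset.mem_powersetCard] at ht
      simp only [Finset.mem_coe, Finset.mem_filter, Finset.mem_powersetCard_univ]
      have hc : t.card ≤ n := le_trans (Finset.card_le_card ht.1)
        (by rw [Finset.card_compl, Fintype.card_fin]; omega)
      constructor
      · rw [Finset.card_compl, Fintype.card_fin, ht.2]
      · rw [← compl_compl s]
        exact Finset.compl_subset_compl.2 ht.1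
    · intro γ _; simp
    · intro t _; simp
  rw [h1, Finset.card_powersetCard, Nat.choose_one_right, Finset.card_compl, Fintype.card_fin]

lemma master {n : ℕ} (hn : 0 < n) (A : Matrix (Fin n) (Fin n) ℝ) (m₁ m₂ k : ℕ) :
    ∑ γ ∈ Finset.univ.powersetCard (n-1),
        Sfun (A.submatrix (Subtype.val : γ → Fin n) Subtype.val) m₁ m₂ k
      = ((n - (m₁ + m₂ - k) : ℕ) : ℝ) * Sfun A m₁ m₂ k := by
  have h1 : ∀ γ ∈ Finset.univ.powersetCard (n-1),
      Sfun (A.submatrix (Subtype.val : γ → Fin n) Subtype.val) m₁ m₂ k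
      = ∑ α ∈ Finset.univ.powersetCard m₁, ∑ β ∈ Finset.univ.powersetCard m₂,
          if α ∪ β ⊆ γ then
            (if (α ∩ β).card = k then pminor A α * pminor A β else 0) else 0 := by
    intro γ _
    rw [Sfun_submatrix, pc_filter γ m₁, Finset.sum_filter]
    refine Finset.sum_congr rfl (fun α _ => ?_)
    by_cases hαγ : α ⊆ γ
    · rw [if_pos hαγ, pc_filter γ m₂, Finset.sum_filter]
      refine Finset.sum_congr rfl (fun β _ => ?_)
      simp [Finset.union_subset_iff, hαγ]
    · rw [if_neg hαγ]
      refine (Finset.sum_eq_zero (fun β _ => ?_)).symm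
      rw [if_neg]
      intro h
      exact hαγ (Finset.Subset.trans Finset.subset_union_left h)
  rw [Finset.sum_congr rfl h1, Finset.sum_comm]
  unfold Sfun
  rw [Finset.mul_sum]
  refine Finset.sum_congr rfl (fun α hα => ?_)
  rw [Finset.sum_comm, Finset.mul_sum]
  refine Finset.sum_congr rfl (fun β hβ => ?_)
  rw [← Finset.sum_filter, Finset.sum_const, nsmul_eq_mul, count_supersets hn]
  by_cases hcond : (α ∩ β).card = k
  · have hm₁ : α.card = m₁ := (Finset.mem_powersetCard_univ.1 hα)
    have hm₂ : β.card = m₂ := (Finset.mem_powersetCard_univ.1 hβ)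
    have hcu : (α ∪ β).card + (α ∩ β).card = α.card + β.card :=
      Finset.card_union_add_card_inter α β
    have hkle : k ≤ m₂ := by
      rw [← hcond, ← hm₂]
      exact Finset.card_le_card (Finset.inter_subset_right)
    have hu : (α ∪ β).card = m₁ + m₂ - k := by omega
    rw [hu]
  · simp [hcond]

theorem stmt_12 {n : ℕ} (A : Matrix (Fin n) (Fin n) ℝ)
    (m₁ m₂ k : ℕ) (hk : k ≤ min m₁ m₂) (hsum : m₁ + m₂ - k < n) :
    (n : ℝ) * Sfun (1 : Matrix (Fin (n - 1)) (Fin (n - 1)) ℝ) m₁ m₂ k *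
        Sfun A m₁ m₂ k =
      Sfun (1 : Matrix (Fin n) (Fin n) ℝ) m₁ m₂ k *
        ∑ γ ∈ Finset.univ.powersetCard (n - 1),
          Sfun (A.submatrix (Subtype.val : γ → Fin n) (Subtype.val : γ → Fin n)) m₁ m₂ k := by
  have hn : 0 < n := lt_of_le_of_lt (Nat.zero_le _) hsum
  have hA := master hn A m₁ m₂ k
  have hI := master hn (1 : Matrix (Fin n) (Fin n) ℝ) m₁ m₂ k
  have hId : ∀ γ ∈ Finset.univ.powersetCard (n-1),
      Sfun ((1 : Matrix (Fin n) (Fin n) ℝ).submatrix (Subtype.val : γ → Fin n) Subtype.val)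
        m₁ m₂ k = Sfun (1 : Matrix (Fin (n-1)) (Fin (n-1)) ℝ) m₁ m₂ k := by
    intro γ hγ
    rw [Matrix.submatrix_one _ Subtype.coe_injective]
    have hcard : Fintype.card γ = n - 1 := by
      rw [Fintype.card_coe]
      exact Finset.mem_powersetCard_univ.1 hγ
    exact Sfun_one_congr (Fintype.equivFinOfCardEq hcard) m₁ m₂ k
  rw [Finset.sum_congr rfl hId, Finset.sum_const, nsmul_eq_mul,
      Finset.card_powersetCard, Finset.card_univ, Fintype.card_fin] at hI
  have hchoose : n.choose (n-1) = n := by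
    have := Nat.choose_symm (show 1 ≤ n from hn)
    simpa using this
  rw [hchoose] at hI
  rw [hA]
  linear_combination Sfun A m₁ m₂ k * hI
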